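/- For every integer n with 0 ≤ n ≤ N, the function of a real variable x defined by the formula for U_n(x;α,β,N) (which is well defined for all sufficiently large real x) tends to 1 as x → +∞. -/

import Mathlib

/-- Pochhammer symbol `(a)_k = a (a+1) ⋯ (a+k-1)`, with `(a)_0 = 1`. -/
noncomputable def poch (a : ℝ) (k : ℕ) : ℝ := ∏ i ∈ Finset.range k, (a + (i : ℝ))

lemma poch_zero (a : ℝ) : poch a 0 = 1 := by simp [poch]

lemma poch_succ (a : ℝ) (k : ℕ) : poch a (k+1) = poch a k * (a + k) := by
  simp [poch, Finset.prod_range_succ]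

lemma poch_succ' (a : ℝ) (k : ℕ) : poch a (k+1) = a * poch (a+1) k := by
  rw [poch, Finset.prod_range_succ', poch, mul_comm]
  congr 1
  · norm_num
  · apply Finset.prod_congr rfl; intro i _; push_cast; ring

lemma poch_reflect (c : ℝ) (n : ℕ) : poch (-c) n = (-1)^n * poch (c - n + 1) n := by
  induction n with
  | zero => simp [poch_zero]
  | succ n ih =>
    have h1 : c - ((n+1:ℕ):ℝ) + 1 = c - n := by push_cast; ring
    rw [poch_succ, ih, h1, poch_succ']
    push_cast; ring

lemma poch_neg_nat (m : ℕ) : ∀ k, k ≤ m → poch (-(m:ℝ)) k = (-1)^k * (m.descFactorial k : ℝ) := by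
  intro k
  induction k with
  | zero => simp [poch_zero]
  | succ k ih =>
    intro h
    have hk : k ≤ m := by omega
    rw [poch_succ, ih hk, Nat.descFactorial_succ]
    push_cast [Nat.cast_sub hk]
    ring

lemma poch_nat_succ (a : ℕ) : ∀ j, poch ((a:ℝ) + 1) j = ((a+j).descFactorial j : ℝ) := by
  intro j
  induction j with
  | zero => simp [poch_zero]
  | succ j ih =>
    have e : a + (j+1) = (a+j)+1 := by ring
    rw [poch_succ, ih, e, Nat.succ_descFactorial_succ]
    push_cast; ring

lemma descFactorial_split (N k : ℕ) : ∀ j, N.descFactorial (k + j) = N.descFactorial k * (N - k).descFactorial j := by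
  intro j
  induction j with
  | zero => simp
  | succ j ih =>
    have e : k + (j+1) = (k+j)+1 := by ring
    rw [e, Nat.descFactorial_succ, ih, Nat.descFactorial_succ, Nat.sub_sub]
    ring

lemma poch_vandermonde (x y : ℝ) (n : ℕ) : poch (x + y) n =
    ∑ k ∈ Finset.range (n+1), (n.choose k : ℝ) * poch x k * poch y (n - k) := by
  induction n with
  | zero => simp [poch_zero]
  | succ n ih =>
    rw [poch_succ, ih, Finset.sum_mul]
    have key : ∀ k ∈ Finset.range (n+1),
        (n.choose k : ℝ) * poch x k * poch y (n-k) * (x + y + n)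
        = (n.choose k : ℝ) * (poch x (k+1) * poch y (n-k))
          + (n.choose k : ℝ) * (poch x k * poch y ((n-k)+1)) := by
      intro k hk
      have hk' : k ≤ n := Nat.lt_succ_iff.mp (Finset.mem_range.mp hk)
      rw [poch_succ, poch_succ, Nat.cast_sub hk']
      ring
    rw [Finset.sum_congr rfl key, Finset.sum_add_distrib]
    -- RHS target: sum over range (n+2)
    rw [Finset.sum_range_succ' (fun k => (((n+1).choose k : ℕ) : ℝ) * poch x k * poch y (n+1-k)) (n+1)]
    simp only [Nat.choose_succ_succ, Nat.succ_sub_succ, Nat.cast_add, Nat.choose_zero_right,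
      Nat.cast_one, one_mul, Nat.sub_zero]
    rw [poch_zero]
    -- target now: Σ_{k<n+1} (C(n,k)+C(n,k+1)) X_{k+1} Y_{n-k} + 1 * 1 * poch y (n+1)
    have split : ∀ k ∈ Finset.range (n+1),
        ((n.choose k : ℝ) + (n.choose (k+1) : ℝ)) * poch x (k+1) * poch y (n-k)
        = (n.choose k : ℝ) * (poch x (k+1) * poch y (n-k))
          + (n.choose (k+1) : ℝ) * (poch x (k+1) * poch y (n-k)) := by
      intro k _; ring
    rw [Finset.sum_congr rfl split, Finset.sum_add_distrib]
    -- second sum in S: Σ_{k<n+1} C(n,k) X_k Y_{(n-k)+1}; pull off first term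
    rw [Finset.sum_range_succ' (fun k => (n.choose k : ℝ) * (poch x k * poch y ((n-k)+1))) n]
    -- third T piece: Σ_{k<n+1} C(n,k+1) X_{k+1} Y_{n-k}; pull off last term
    rw [Finset.sum_range_succ (fun k => (n.choose (k+1) : ℝ) * (poch x (k+1) * poch y (n-k))) n]
    have last0 : (n.choose (n+1) : ℝ) = 0 := by
      simp [Nat.choose_eq_zero_of_lt (Nat.lt_succ_self n)]
    rw [last0]
    have congr2 : ∀ k ∈ Finset.range n,
        (n.choose (k+1) : ℝ) * (poch x (k+1) * poch y ((n-(k+1))+1))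
        = (n.choose (k+1) : ℝ) * (poch x (k+1) * poch y (n-k)) := by
      intro k hk
      have : (n-(k+1))+1 = n-k := by
        have := Finset.mem_range.mp hk; omega
      rw [this]
    rw [Finset.sum_congr rfl congr2]
    simp [poch_zero]
    ring

lemma chu (b : ℝ) (n N : ℕ) (hn : n ≤ N) :
    ∑ k ∈ Finset.range (n+1), poch (-(n:ℝ)) k * poch b k / ((Nat.factorial k : ℝ) * poch (-(N:ℝ)) k)
      = poch (-(N:ℝ) - b) n / poch (-(N:ℝ)) n := by
  have hterm : ∀ k ∈ Finset.range (n+1),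
      poch (-(n:ℝ)) k * poch b k / ((Nat.factorial k : ℝ) * poch (-(N:ℝ)) k)
      = (n.choose k : ℝ) * poch b k * poch (((N - n : ℕ) : ℝ) + 1) (n - k) / (N.descFactorial n : ℝ) := by
    intro k hk
    have hk' : k ≤ n := Nat.lt_succ_iff.mp (Finset.mem_range.mp hk)
    rw [poch_neg_nat n k hk', poch_neg_nat N k (hk'.trans hn), poch_nat_succ (N - n) (n - k),
      show (N - n) + (n - k) = N - k by omega]
    have e2 : N.descFactorial n = N.descFactorial k * (N - k).descFactorial (n - k) := by
      have := descFactorial_split N k (n - k)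
      rwa [show k + (n - k) = n by omega] at this
    have e3 : (n.descFactorial k : ℝ) = (Nat.factorial k : ℝ) * (n.choose k : ℝ) := by
      exact_mod_cast congrArg (Nat.cast : ℕ → ℝ) (Nat.descFactorial_eq_factorial_mul_choose n k)
    have hdf : ∀ m j : ℕ, j ≤ m → ((m.descFactorial j : ℕ) : ℝ) ≠ 0 := by
      intro m j hj h0
      have : m.descFactorial j = 0 := by exact_mod_cast h0
      have := Nat.descFactorial_eq_zero_iff_lt.mp this
      omega
    have hdfNk : ((N.descFactorial k : ℕ) : ℝ) ≠ 0 := hdf N k (hk'.trans hn)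
    have hdfNn : (((N - k).descFactorial (n - k) : ℕ) : ℝ) ≠ 0 := hdf (N - k) (n - k) (by omega)
    have hfac : (Nat.factorial k : ℝ) ≠ 0 := by
      exact_mod_cast k.factorial_ne_zero
    have hm1 : ((-1 : ℝ))^k ≠ 0 := by
      apply pow_ne_zero; norm_num
    rw [e2, e3]
    push_cast
    field_simp
  rw [Finset.sum_congr rfl hterm, ← Finset.sum_div]
  have hv := poch_vandermonde b (((N - n : ℕ) : ℝ) + 1) n
  rw [← hv]
  rw [poch_neg_nat N n hn]
  have : -(N:ℝ) - b = -((N:ℝ) + b) := by ring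
  rw [this, poch_reflect ((N:ℝ) + b) n]
  have e4 : (N:ℝ) + b - (n:ℝ) + 1 = b + (((N - n : ℕ) : ℝ) + 1) := by
    push_cast [Nat.cast_sub hn]; ring
  rw [e4]
  rw [mul_div_mul_left _ _ (show ((-1:ℝ))^n ≠ 0 by apply pow_ne_zero; norm_num)]


/-- The rational function of Hahn type `U_n(x;α,β,N)`, regarded as a function
of a real variable `x` (well defined wherever the denominators `(α-x)_k` are
nonzero, in particular for all `x > α`). -/
noncomputable def Ureal (α β : ℝ) (N n : ℕ) (x : ℝ) : ℝ :=
  ((-1 : ℝ) ^ n * poch (-(N : ℝ)) n / poch (β + 1) n) *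
    ∑ k ∈ Finset.range (n + 1),
      poch (-x) k * poch (-(n : ℝ)) k * poch (β + (n : ℝ) - (N : ℝ)) k /
        ((Nat.factorial k : ℝ) * poch (-(N : ℝ)) k * poch (α - x) k)

theorem statement5 (N : ℕ) (hN : 0 < N) (α β : ℝ)
    (hα : ∀ m : ℤ, α ≠ (m : ℝ)) (hβ : ∀ m : ℤ, β ≠ (m : ℝ))
    (n : ℕ) (hn : n ≤ N) :
    Filter.Tendsto (fun x : ℝ => Ureal α β N n x) Filter.atTop (nhds 1) := by
  classical
  set C : ℝ := (-1 : ℝ) ^ n * poch (-(N : ℝ)) n / poch (β + 1) n with hC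
  set c : ℕ → ℝ := fun k =>
    C * (poch (-(n:ℝ)) k * poch (β + (n:ℝ) - (N:ℝ)) k / ((Nat.factorial k : ℝ) * poch (-(N:ℝ)) k))
    with hc
  -- Step A: rewrite Ureal
  have stepA : ∀ x : ℝ, Ureal α β N n x
      = ∑ k ∈ Finset.range (n+1), c k * (poch (-x) k / poch (α - x) k) := by
    intro x
    rw [Ureal, Finset.mul_sum]
    refine Finset.sum_congr rfl fun k _ => ?_
    rw [hc]
    simp only [div_eq_mul_inv, mul_inv]
    ring
  -- Step B: each ratio tends to 1
  have hq : ∀ k : ℕ, Filter.Tendsto (fun x : ℝ => poch (-x) k / poch (α - x) k)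
      Filter.atTop (nhds 1) := by
    intro k
    have heq : ∀ x : ℝ, poch (-x) k / poch (α - x) k
        = ∏ i ∈ Finset.range k, ((-x + i) / (α - x + i)) := by
      intro x; rw [poch, poch, ← Finset.prod_div_distrib]
    have h1 : (1:ℝ) = ∏ _i ∈ Finset.range k, (1:ℝ) := by simp
    rw [funext heq, h1]
    apply tendsto_finset_prod
    intro i _
    have hden : Filter.Tendsto (fun x : ℝ => x - (α + i)) Filter.atTop Filter.atTop := by
      simpa [sub_eq_add_neg] using
        Filter.tendsto_atTop_add_const_right Filter.atTop (-(α + (i:ℝ))) Filter.tendsto_id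
    have h0 : Filter.Tendsto (fun x : ℝ => α / (α - x + i)) Filter.atTop (nhds 0) := by
      have h := (hden.inv_tendsto_atTop.const_mul α).neg
      simp only [mul_zero, neg_zero] at h
      apply h.congr
      intro x
      show -(α * (x - (α + i))⁻¹) = α / (α - x + i)
      rw [div_eq_mul_inv, show α - x + (i:ℝ) = -(x - (α + i)) by ring, inv_neg, mul_neg]
    have hlim : Filter.Tendsto (fun x : ℝ => 1 - α / (α - x + i)) Filter.atTop (nhds 1) := by
      simpa using (tendsto_const_nhds (x := (1:ℝ)) (f := Filter.atTop)).sub h0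
    apply hlim.congr'
    filter_upwards [Filter.eventually_gt_atTop (α + i)] with x hx
    have hne : α - x + i ≠ 0 := by
      intro h; rw [show x = α + i by linarith] at hx; linarith
    field_simp
    ring
  -- Step C: limit is the sum of constants
  have stepC : Filter.Tendsto (fun x : ℝ => Ureal α β N n x) Filter.atTop
      (nhds (∑ k ∈ Finset.range (n+1), c k)) := by
    rw [funext stepA]
    have : (∑ k ∈ Finset.range (n+1), c k) = ∑ k ∈ Finset.range (n+1), c k * 1 := by simp
    rw [this]
    apply tendsto_finset_sum
    intro k _
    exact (hq k).const_mul (c k)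
  -- Step D: the sum of constants is 1
  have hbpos : poch (β + 1) n ≠ 0 := by
    rw [poch]
    apply Finset.prod_ne_zero_iff.mpr
    intro i _ h
    exact hβ (-1 - (i:ℤ)) (by push_cast; linarith)
  have hNne : poch (-(N:ℝ)) n ≠ 0 := by
    rw [poch_neg_nat N n hn]
    apply mul_ne_zero (by apply pow_ne_zero; norm_num)
    intro h0
    have : N.descFactorial n = 0 := by exact_mod_cast h0
    have := Nat.descFactorial_eq_zero_iff_lt.mp this
    omega
  have stepD : (∑ k ∈ Finset.range (n+1), c k) = 1 := by
    rw [hc, ← Finset.mul_sum, chu (β + (n:ℝ) - (N:ℝ)) n N hn]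
    have e1 : -(N:ℝ) - (β + (n:ℝ) - (N:ℝ)) = -(β + (n:ℝ)) := by ring
    rw [e1, poch_reflect (β + (n:ℝ)) n]
    have e2 : β + (n:ℝ) - (n:ℝ) + 1 = β + 1 := by ring
    rw [e2, hC]
    have hm1 : ((-1:ℝ))^n * ((-1:ℝ))^n = 1 := by
      rw [← mul_pow]; norm_num
    field_simp
    linear_combination hm1
  rw [← stepD]
  exact stepC
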